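/- (Key computation in Proposition 4.2: the right twist of the quadratic difference X^{a−2,a−1,b−2,b−1,c−2,c−1} is a product of three frozen Plücker coordinates with the Plücker coordinate Δ_{a,b,c}.) For all vectors p₁, p₂, p₃, q₁, q₂, q₃, r₁, r₂, r₃ ∈ ℝ³, det( (p₁×p₂)×(p₂×p₃), (q₁×q₂)×(q₂×q₃), (r₁×r₂)×(r₂×r₃) ) = det(p₁,p₂,p₃)·det(q₁,q₂,q₃)·det(r₁,r₂,r₃)·det(p₂,q₂,r₂). -/
import Mathlib


/-- Determinant of the 3×3 real matrix with columns `a`, `b`, `c`. -/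
noncomputable def det3 (a b c : Fin 3 → ℝ) : ℝ :=
  (Matrix.of ![a, b, c]).transpose.det

/-- The standard cross product on `ℝ³`. -/
def cross (a b : Fin 3 → ℝ) : Fin 3 → ℝ := crossProduct a b

lemma det3_expand (a b c : Fin 3 → ℝ) :
    det3 a b c = a 0 * (b 1 * c 2 - b 2 * c 1) - b 0 * (a 1 * c 2 - a 2 * c 1)
      + c 0 * (a 1 * b 2 - a 2 * b 1) := by
  simp [det3, Matrix.det_fin_three, Matrix.transpose]
  ring

lemma crossApp (a b : Fin 3 → ℝ) (i : Fin 3) :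
    cross a b i = ![a 1 * b 2 - a 2 * b 1, a 2 * b 0 - a 0 * b 2, a 0 * b 1 - a 1 * b 0] i := by
  fin_cases i <;> simp [cross, crossProduct]

lemma key (a b c : Fin 3 → ℝ) (i : Fin 3) :
    cross (cross a b) (cross b c) i = det3 a b c * b i := by
  fin_cases i <;> simp [crossApp, det3_expand] <;> ring

/-- Key computation in Proposition 4.2: the right twist of the quadratic difference
`X^{a−2,a−1,b−2,b−1,c−2,c−1}` is a product of three frozen Plücker coordinates with
the Plücker coordinate `Δ_{a,b,c}`. -/
theorem twist_of_quadratic_difference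
    (p₁ p₂ p₃ q₁ q₂ q₃ r₁ r₂ r₃ : Fin 3 → ℝ) :
    det3 (cross (cross p₁ p₂) (cross p₂ p₃))
         (cross (cross q₁ q₂) (cross q₂ q₃))
         (cross (cross r₁ r₂) (cross r₂ r₃))
      = det3 p₁ p₂ p₃ * det3 q₁ q₂ q₃ * det3 r₁ r₂ r₃ * det3 p₂ q₂ r₂ := by
  rw [det3_expand, key, key, key, key, key, key, key, key, key,
    det3_expand p₁, det3_expand q₁, det3_expand r₁, det3_expand p₂]
  ring
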